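/- If BAᵀ is invertible with polar decomposition BAᵀ = UP (U orthogonal, P symmetric positive definite), then U is the unique orthogonal matrix minimizing ‖VA - B‖ (Frobenius norm) over all V ∈ O(n). -/

import Mathlib

open Matrix
open scoped MatrixOrder

/-- The squared Frobenius norm of a matrix. -/
def frobSq {m n : Type*} [Fintype m] [Fintype n] (A : Matrix m n ℝ) : ℝ :=
  ∑ i, ∑ j, (A i j) ^ 2

lemma trace_tmul_eq {m k : ℕ} (R : Matrix (Fin m) (Fin k) ℝ) :
    (Rᵀ * R).trace = ∑ j, ∑ i, (R i j) ^ 2 := by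
  simp [Matrix.trace, Matrix.mul_apply, sq, Matrix.diag]

lemma trace_tmul_nonneg {m k : ℕ} (R : Matrix (Fin m) (Fin k) ℝ) :
    0 ≤ (Rᵀ * R).trace := by
  rw [trace_tmul_eq]; positivity

lemma eq_zero_of_trace_tmul {m k : ℕ} (R : Matrix (Fin m) (Fin k) ℝ)
    (h : (Rᵀ * R).trace = 0) : R = 0 := by
  rw [trace_tmul_eq] at h
  ext i j
  have h1 : ∀ j ∈ Finset.univ, (0:ℝ) ≤ ∑ i, (R i j)^2 := by intro j _; positivity
  have h2 := (Finset.sum_eq_zero_iff_of_nonneg h1).mp h j (Finset.mem_univ j)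
  have h3 : ∀ i ∈ Finset.univ, (0:ℝ) ≤ (R i j)^2 := by intro i _; positivity
  have := (Finset.sum_eq_zero_iff_of_nonneg h3).mp h2 i (Finset.mem_univ i)
  simpa using pow_eq_zero_iff (n := 2) (by norm_num) |>.mp this

lemma frobSq_eq_trace {m k : ℕ} (M : Matrix (Fin m) (Fin k) ℝ) :
    frobSq M = (Mᵀ * M).trace := by
  rw [frobSq, trace_tmul_eq, Finset.sum_comm]

lemma key {n : ℕ} (P Q : Matrix (Fin n) (Fin n) ℝ) (hP : P.PosDef) (hQ : Qᵀ * Q = 1) :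
    (Q * P).trace ≤ P.trace ∧ ((Q * P).trace = P.trace → Q = 1) := by
  set S := CFC.sqrt P with hS
  have hSS : S * S = P := CFC.sqrt_mul_sqrt_self P hP.posSemidef.nonneg
  have hSsym : Sᵀ = S := by
    have := (CFC.sqrt_nonneg P).posSemidef.isHermitian
    simpa [Matrix.IsHermitian, Matrix.conjTranspose_eq_transpose_of_trivial] using this
  set R := (Q - 1) * S with hR
  have e1 : Rᵀ * R = S * (Qᵀ * Q) * S - S * Qᵀ * S - S * Q * S + S * S := by
    rw [hR, transpose_mul, hSsym, transpose_sub, transpose_one]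
    noncomm_ring
  rw [hQ, hSS, mul_one] at e1
  have h1 : (S * Q * S).trace = (Q * P).trace := by
    rw [Matrix.trace_mul_comm (S * Q) S, ← mul_assoc, hSS, Matrix.trace_mul_comm]
  have h2 : (S * Qᵀ * S).trace = (Q * P).trace := by
    rw [← Matrix.trace_transpose (S * Qᵀ * S)]
    simp only [transpose_mul, transpose_transpose, hSsym]
    rw [← mul_assoc, h1]
  have htr : (Rᵀ * R).trace = 2 * (P.trace - (Q * P).trace) := by
    rw [e1, Matrix.trace_add, Matrix.trace_sub, Matrix.trace_sub, h1, h2, hSS]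
    ring
  have hnn := trace_tmul_nonneg R
  constructor
  · linarith [htr ▸ hnn]
  · intro heq
    have hR0 : R = 0 := by
      apply eq_zero_of_trace_tmul
      rw [htr, heq]; ring
    have hQP : (Q - 1) * P = 0 := by
      rw [← hSS, ← mul_assoc, ← hR, hR0, zero_mul]
    have hdet : IsUnit P.det := (Matrix.isUnit_iff_isUnit_det P).mp hP.isUnit
    have : Q - 1 = 0 := by
      calc Q - 1 = (Q - 1) * (P * P⁻¹) := by rw [Matrix.mul_nonsing_inv P hdet, mul_one]
        _ = ((Q - 1) * P) * P⁻¹ := by rw [mul_assoc]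
        _ = 0 := by rw [hQP, zero_mul]
    exact sub_eq_zero.mp this

lemma frob_expand {n k : ℕ} (A B : Matrix (Fin n) (Fin k) ℝ)
    (V : Matrix (Fin n) (Fin n) ℝ) (hV : Vᵀ * V = 1) :
    frobSq (V * A - B) =
      (Aᵀ * A).trace + (Bᵀ * B).trace - 2 * (Vᵀ * (B * Aᵀ)).trace := by
  rw [frobSq_eq_trace]
  have e1 : (V * A - B)ᵀ * (V * A - B) =
      Aᵀ * A - Aᵀ * Vᵀ * B - Bᵀ * (V * A) + Bᵀ * B := by
    rw [transpose_sub, transpose_mul, Matrix.sub_mul, Matrix.mul_sub, Matrix.mul_sub]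
    have h : Aᵀ * Vᵀ * (V * A) = Aᵀ * A := by
      rw [Matrix.mul_assoc, ← Matrix.mul_assoc Vᵀ, hV, Matrix.one_mul]
    rw [h]; abel
  have h1 : (Bᵀ * (V * A)).trace = (Aᵀ * Vᵀ * B).trace := by
    rw [← Matrix.trace_transpose (Bᵀ * (V * A))]
    simp only [transpose_mul, transpose_transpose, Matrix.mul_assoc]
  have h2 : (Aᵀ * Vᵀ * B).trace = (Vᵀ * (B * Aᵀ)).trace := by
    rw [Matrix.mul_assoc, Matrix.trace_mul_comm, Matrix.mul_assoc]
  rw [e1, Matrix.trace_add, Matrix.trace_sub, Matrix.trace_sub, h1, h2]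
  ring

/-- If BAᵀ is invertible with polar decomposition BAᵀ = UP (U orthogonal, P symmetric
positive definite), then U is the unique orthogonal matrix minimizing ‖VA - B‖
(Frobenius norm) over all orthogonal V. -/
theorem procrustes_solution_via_polar {n k : ℕ}
    (A B : Matrix (Fin n) (Fin k) ℝ)
    (U P : Matrix (Fin n) (Fin n) ℝ)
    (hinv : IsUnit (B * Aᵀ))
    (hU : Uᵀ * U = 1) (hP : P.PosDef) (hUP : B * Aᵀ = U * P) :
    (∀ V : Matrix (Fin n) (Fin n) ℝ, Vᵀ * V = 1 →
      frobSq (U * A - B) ≤ frobSq (V * A - B)) ∧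
    (∀ V : Matrix (Fin n) (Fin n) ℝ, Vᵀ * V = 1 →
      (∀ V' : Matrix (Fin n) (Fin n) ℝ, V'ᵀ * V' = 1 →
        frobSq (V * A - B) ≤ frobSq (V' * A - B)) → V = U) := by
  have hQorth : ∀ V : Matrix (Fin n) (Fin n) ℝ, Vᵀ * V = 1 → (Vᵀ * U)ᵀ * (Vᵀ * U) = 1 := by
    intro V hV
    have hVV : V * Vᵀ = 1 := mul_eq_one_comm.mp hV
    rw [transpose_mul, transpose_transpose, mul_assoc, ← mul_assoc V, hVV, one_mul, hU]
  have htrV : ∀ V : Matrix (Fin n) (Fin n) ℝ,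
      (Vᵀ * (B * Aᵀ)).trace = ((Vᵀ * U) * P).trace := by
    intro V; rw [hUP, mul_assoc]
  have hU_tr : (Uᵀ * (B * Aᵀ)).trace = P.trace := by
    rw [htrV, hU, one_mul]
  constructor
  · intro V hV
    rw [frob_expand A B U hU, frob_expand A B V hV, hU_tr, htrV]
    have := (key P (Vᵀ * U) hP (hQorth V hV)).1
    linarith
  · intro V hV hmin
    have h1 := hmin U hU
    have h2 : frobSq (U * A - B) ≤ frobSq (V * A - B) := by
      rw [frob_expand A B U hU, frob_expand A B V hV, hU_tr, htrV]
      have := (key P (Vᵀ * U) hP (hQorth V hV)).1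
      linarith
    have heq : frobSq (V * A - B) = frobSq (U * A - B) := le_antisymm h1 h2
    rw [frob_expand A B U hU, frob_expand A B V hV, hU_tr, htrV] at heq
    have htr_eq : ((Vᵀ * U) * P).trace = P.trace := by linarith
    have hQ1 : Vᵀ * U = 1 := (key P (Vᵀ * U) hP (hQorth V hV)).2 htr_eq
    have hVV : V * Vᵀ = 1 := mul_eq_one_comm.mp hV
    calc V = V * (Vᵀ * U) := by rw [hQ1, mul_one]
      _ = (V * Vᵀ) * U := by rw [mul_assoc]
      _ = U := by rw [hVV, one_mul]
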